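/- On a nearly cosymplectic manifold, for all tangent vectors X and Y: |(∇_X θ)(Y)|² + g(Y, ∇_X ξ)² = -R(X, Y, X, Y) + R(X, Y, θX, θY). -/
import Mathlib


/-- Abstract algebraic model of a nearly cosymplectic (almost contact metric)
manifold: `A` plays the role of the algebra of smooth functions, `V` of the
module of vector fields, `D` of the directional derivative, `g` of the metric,
`nabla` of the Levi-Civita connection, `θ` of the structure tensor and `ξ` of
the characteristic (Reeb) unit vector field, with `η X = g X ξ`. -/
structure NearlyCosymplectic where
  A : Type
  V : Type
  [ringA : CommRing A]
  [algA : Algebra ℝ A]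
  [grpV : AddCommGroup V]
  [modV : Module A V]
  /-- directional derivative of functions along a vector field -/
  D : V → A → A
  D_addl : ∀ X Y f, D (X + Y) f = D X f + D Y f
  D_smull : ∀ (f : A) (X : V) (h : A), D (f • X) h = f * D X h
  D_addr : ∀ (X : V) (f h : A), D X (f + h) = D X f + D X h
  D_mul : ∀ (X : V) (f h : A), D X (f * h) = D X f * h + f * D X h
  /-- Lie bracket of vector fields -/
  bracket : V → V → V
  bracket_D : ∀ X Y f, D (bracket X Y) f = D X (D Y f) - D Y (D X f)
  /-- the Riemannian metric -/
  g : V → V → A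
  g_symm : ∀ X Y, g X Y = g Y X
  g_addl : ∀ X Y Z, g (X + Y) Z = g X Z + g Y Z
  g_smull : ∀ (f : A) X Y, g (f • X) Y = f * g X Y
  /-- the Levi-Civita connection -/
  nabla : V → V → V
  nabla_addl : ∀ X Y Z, nabla (X + Y) Z = nabla X Z + nabla Y Z
  nabla_smull : ∀ (f : A) X Y, nabla (f • X) Y = f • nabla X Y
  nabla_addr : ∀ X Y Z, nabla X (Y + Z) = nabla X Y + nabla X Z
  nabla_leibniz : ∀ (X : V) (f : A) (Y : V),
    nabla X (f • Y) = D X f • Y + f • nabla X Y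
  metric_compat : ∀ X Y Z, D X (g Y Z) = g (nabla X Y) Z + g Y (nabla X Z)
  torsion_free : ∀ X Y, nabla X Y - nabla Y X = bracket X Y
  /-- the structure (1,1)-tensor θ -/
  θ : V → V
  θ_add : ∀ X Y, θ (X + Y) = θ X + θ Y
  θ_smul : ∀ (f : A) X, θ (f • X) = f • θ X
  /-- the characteristic vector field ξ -/
  ξ : V
  /-- ξ is a unit vector field (and η(ξ)=1, with η X = g X ξ) -/
  ξ_unit : g ξ ξ = 1
  /-- θ² = -Id + η ⊗ ξ -/
  θ_sq : ∀ X, θ (θ X) = -X + g X ξ • ξ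
  /-- metric compatibility of the almost contact structure -/
  θ_compat : ∀ X Y, g (θ X) (θ Y) = g X Y - g X ξ * g Y ξ
  /-- the nearly cosymplectic condition (∇_X θ)(Y) + (∇_Y θ)(X) = 0 -/
  nearly : ∀ X Y,
    (nabla X (θ Y) - θ (nabla X Y)) + (nabla Y (θ X) - θ (nabla Y X)) = 0

attribute [instance] NearlyCosymplectic.ringA NearlyCosymplectic.algA
  NearlyCosymplectic.grpV NearlyCosymplectic.modV

namespace NearlyCosymplectic

variable (M : NearlyCosymplectic)

/-- the covariant derivative (∇_X θ)(Y) -/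
def nablaθ (X Y : M.V) : M.V := M.nabla X (M.θ Y) - M.θ (M.nabla X Y)

/-- the Riemann curvature operator R(X,Y)Z = [∇_X,∇_Y]Z - ∇_{[X,Y]}Z -/
def R (X Y Z : M.V) : M.V :=
  M.nabla X (M.nabla Y Z) - M.nabla Y (M.nabla X Z) - M.nabla (M.bracket X Y) Z

/-- the second covariant derivative (∇²_{X,Y} θ)(Z) -/
def nabla2θ (X Y Z : M.V) : M.V :=
  M.nabla X (M.nablaθ Y Z) - M.nablaθ (M.nabla X Y) Z - M.nablaθ Y (M.nabla X Z)

end NearlyCosymplectic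

open NearlyCosymplectic

section AuxNC

open NearlyCosymplectic
variable {M : NearlyCosymplectic}

private lemma half_A {a : M.A} (h : a + a = 0) : a = 0 := by
  have h2 : (algebraMap ℝ M.A 2) * a = 0 := by rw [map_ofNat]; linear_combination h
  calc a = (algebraMap ℝ M.A (1/2)) * ((algebraMap ℝ M.A 2) * a) := by
        rw [← mul_assoc, ← map_mul]; norm_num
    _ = 0 := by rw [h2, mul_zero]

private lemma half_V {v : M.V} (h : v + v = 0) : v = 0 := by
  have h2 : (algebraMap ℝ M.A 2) • v = 0 := by rw [map_ofNat, two_smul]; exact h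
  calc v = (algebraMap ℝ M.A (1/2)) • ((algebraMap ℝ M.A 2) • v) := by
        rw [smul_smul, ← map_mul]; norm_num
    _ = 0 := by rw [h2, smul_zero]

private lemma g_addr (X Y Z : M.V) : M.g X (Y + Z) = M.g X Y + M.g X Z := by
  rw [M.g_symm, M.g_addl, M.g_symm Y, M.g_symm Z]

private lemma g_negl (X Y : M.V) : M.g (-X) Y = -(M.g X Y) := by
  rw [← neg_one_smul M.A X, M.g_smull]; ring

private lemma g_negr (X Y : M.V) : M.g X (-Y) = -(M.g X Y) := by
  rw [M.g_symm, g_negl, M.g_symm]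

private lemma g_subl (X Y Z : M.V) : M.g (X - Y) Z = M.g X Z - M.g Y Z := by
  rw [sub_eq_add_neg, M.g_addl, g_negl, sub_eq_add_neg]

private lemma g_subr (X Y Z : M.V) : M.g X (Y - Z) = M.g X Y - M.g X Z := by
  rw [sub_eq_add_neg, g_addr, g_negr, sub_eq_add_neg]

private lemma g_zerol (Y : M.V) : M.g 0 Y = 0 := by
  rw [show (0:M.V) = (0:M.A) • (0:M.V) by simp, M.g_smull, zero_mul]

private lemma g_zeror (Y : M.V) : M.g Y 0 = 0 := by rw [M.g_symm, g_zerol]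

private lemma D_zero (X : M.V) : M.D X 0 = 0 := by
  have h := M.D_addr X 0 0; rw [add_zero] at h; linear_combination -h

private lemma D_one (X : M.V) : M.D X 1 = 0 := by
  have h := M.D_mul X 1 1
  simp only [mul_one, one_mul] at h; linear_combination -h

private lemma D_neg (X : M.V) (f : M.A) : M.D X (-f) = -M.D X f := by
  have h := M.D_addr X f (-f); rw [add_neg_cancel, D_zero] at h; linear_combination -h

private lemma D_sub (X : M.V) (f h : M.A) : M.D X (f - h) = M.D X f - M.D X h := by
  rw [sub_eq_add_neg, M.D_addr, D_neg, sub_eq_add_neg]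

private lemma nabla_zeror (X : M.V) : M.nabla X 0 = 0 := by
  simpa using M.nabla_leibniz X 0 0

private lemma nabla_negr (X Y : M.V) : M.nabla X (-Y) = -M.nabla X Y := by
  have h := M.nabla_leibniz X (-1) Y
  rw [neg_one_smul] at h
  rw [h, D_neg, D_one, neg_zero, zero_smul, neg_one_smul, zero_add]

private lemma nabla_subr (X Y Z : M.V) : M.nabla X (Y - Z) = M.nabla X Y - M.nabla X Z := by
  rw [sub_eq_add_neg, M.nabla_addr, nabla_negr, sub_eq_add_neg]

private lemma nabla_negl (X Y : M.V) : M.nabla (-X) Y = -M.nabla X Y := by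
  have h := M.nabla_smull (-1) X Y; rwa [neg_one_smul, neg_one_smul] at h

private lemma nabla_subl (X Y Z : M.V) : M.nabla (X - Y) Z = M.nabla X Z - M.nabla Y Z := by
  rw [sub_eq_add_neg, M.nabla_addl, nabla_negl, sub_eq_add_neg]

private lemma θ_neg (X : M.V) : M.θ (-X) = -M.θ X := by
  have h := M.θ_smul (-1) X; rwa [neg_one_smul, neg_one_smul] at h

private lemma θ_sub (X Y : M.V) : M.θ (X - Y) = M.θ X - M.θ Y := by
  rw [sub_eq_add_neg, M.θ_add, θ_neg, sub_eq_add_neg]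

/- P is skew -/
private lemma P_skew (A B : M.V) : M.nablaθ A B = -M.nablaθ B A :=
  eq_neg_of_add_eq_zero_left (M.nearly A B)

private lemma P_diag (A : M.V) : M.nablaθ A A = 0 := half_V (M.nearly A A)

private lemma N_symm (A B C : M.V) : M.nabla2θ A B C + M.nabla2θ A C B = 0 := by
  unfold nabla2θ
  rw [P_skew C B, P_skew C (M.nabla A B), P_skew (M.nabla A C) B, nabla_negr]
  abel

private lemma N_diag (A B : M.V) : M.nabla2θ A B B = 0 := half_V (N_symm A B B)

/- Ricci identity for θ -/
private lemma ricci (X Y Z : M.V) :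
    M.R X Y (M.θ Z) - M.θ (M.R X Y Z) = M.nabla2θ X Y Z - M.nabla2θ Y X Z := by
  simp only [NearlyCosymplectic.R, nabla2θ, nablaθ, ← M.torsion_free, nabla_subl,
    nabla_subr, θ_sub, M.θ_add, M.nabla_addr]
  abel

/- differentiated θ-compatibility -/
private lemma keyA (A B C : M.V) :
    M.g (M.nablaθ A B) (M.θ C) + M.g (M.θ B) (M.nablaθ A C)
      = -(M.g B (M.nabla A M.ξ) * M.g C M.ξ) - M.g B M.ξ * M.g C (M.nabla A M.ξ) := by
  have e0 := congrArg (M.D A) (M.θ_compat B C)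
  rw [D_sub, M.D_mul] at e0
  have c1 := M.metric_compat A (M.θ B) (M.θ C)
  have tB : M.nabla A (M.θ B) = M.nablaθ A B + M.θ (M.nabla A B) := by unfold nablaθ; abel
  have tC : M.nabla A (M.θ C) = M.nablaθ A C + M.θ (M.nabla A C) := by unfold nablaθ; abel
  rw [tB, tC, M.g_addl, g_addr, M.θ_compat (M.nabla A B) C, M.θ_compat B (M.nabla A C)] at c1
  have c2 := M.metric_compat A B C
  have c3 := M.metric_compat A B M.ξ
  have c4 := M.metric_compat A C M.ξ
  linear_combination e0 - c1 + c2 - (M.g C M.ξ) * c3 - (M.g B M.ξ) * c4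

private lemma eta_h (A : M.V) : M.g (M.nabla A M.ξ) M.ξ = 0 := by
  have c := M.metric_compat A M.ξ M.ξ
  rw [M.ξ_unit, D_one, M.g_symm M.ξ] at c
  exact half_A (by linear_combination -c)

private lemma keyC (A B : M.V) :
    M.g B (M.nabla A M.ξ)
      = -(M.g (M.nablaθ A B) (M.θ M.ξ)) - M.g (M.θ B) (M.nablaθ A M.ξ) := by
  have k := keyA A B M.ξ
  rw [M.ξ_unit, M.g_symm M.ξ (M.nabla A M.ξ), eta_h] at k
  linear_combination k

private lemma hD (A B : M.V) :
    M.g B (M.nabla A M.ξ) + M.g A (M.nabla B M.ξ)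
      = -(M.g A (M.nabla M.ξ M.ξ) * M.g B M.ξ) - M.g A M.ξ * M.g B (M.nabla M.ξ M.ξ) := by
  have k1 := keyC A B
  have k2 := keyC B A
  have k3 := keyA M.ξ A B
  rw [P_skew B A, P_skew B M.ξ, g_negl, g_negr] at k2
  rw [P_skew A M.ξ, g_negr] at k1
  rw [M.g_symm (M.nablaθ M.ξ A) (M.θ B)] at k3
  linear_combination k1 + k2 + k3

private lemma h_xi (A : M.V) : M.g A (M.nabla M.ξ M.ξ) = 0 := by
  have d := hD A M.ξ
  rw [M.ξ_unit, M.g_symm M.ξ (M.nabla A M.ξ), eta_h, M.g_symm M.ξ (M.nabla M.ξ M.ξ), eta_h] at d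
  exact half_A (by linear_combination d)

private lemma h_skew (A B : M.V) : M.g B (M.nabla A M.ξ) = -M.g A (M.nabla B M.ξ) := by
  have d := hD A B
  rw [h_xi, h_xi] at d
  linear_combination d

private lemma h_diag (A : M.V) : M.g A (M.nabla A M.ξ) = 0 :=
  half_A (by linear_combination h_skew A A)

/-- (∇_C h)(A) -/
private def Kc (M : NearlyCosymplectic) (C A : M.V) : M.V :=
  M.nabla C (M.nabla A M.ξ) - M.nabla (M.nabla C A) M.ξ

private lemma K_skew (C A B : M.V) : M.g B (Kc M C A) + M.g A (Kc M C B) = 0 := by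
  have d1 := congrArg (M.D C)
    (show M.g B (M.nabla A M.ξ) + M.g A (M.nabla B M.ξ) = 0 by rw [h_skew]; ring)
  rw [M.D_addr, D_zero, M.metric_compat, M.metric_compat] at d1
  have s1 := h_skew A (M.nabla C B)
  have s2 := h_skew B (M.nabla C A)
  simp only [Kc, g_subr]
  linear_combination d1 - s1 - s2

private lemma K_diag (C A : M.V) : M.g A (Kc M C A) = 0 := half_A (K_skew C A A)

private lemma R_skew (X Y Z W : M.V) : M.g (M.R X Y Z) W + M.g Z (M.R X Y W) = 0 := by
  have a1 : M.D X (M.D Y (M.g Z W))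
      = M.g (M.nabla X (M.nabla Y Z)) W + M.g (M.nabla Y Z) (M.nabla X W)
        + M.g (M.nabla X Z) (M.nabla Y W) + M.g Z (M.nabla X (M.nabla Y W)) := by
    rw [M.metric_compat Y Z W, M.D_addr, M.metric_compat X, M.metric_compat X]; ring
  have a2 : M.D Y (M.D X (M.g Z W))
      = M.g (M.nabla Y (M.nabla X Z)) W + M.g (M.nabla X Z) (M.nabla Y W)
        + M.g (M.nabla Y Z) (M.nabla X W) + M.g Z (M.nabla Y (M.nabla X W)) := by
    rw [M.metric_compat X Z W, M.D_addr, M.metric_compat Y, M.metric_compat Y]; ring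
  have a3 := M.bracket_D X Y (M.g Z W)
  have a4 := M.metric_compat (M.bracket X Y) Z W
  simp only [NearlyCosymplectic.R, g_subl, g_subr]
  linear_combination -a1 + a2 - a3 + a4

private lemma R_xi (X Y : M.V) : M.R X Y M.ξ = Kc M X Y - Kc M Y X := by
  simp only [NearlyCosymplectic.R, Kc, ← M.torsion_free, nabla_subl]
  abel

/- the big differentiated identity -/
private lemma bigB (X Y Z W : M.V) :
    M.g (M.nabla2θ X Y Z) (M.θ W) + M.g (M.θ Z) (M.nabla2θ X Y W)
      + M.g (M.nablaθ Y Z) (M.nablaθ X W) + M.g (M.nablaθ X Z) (M.nablaθ Y W)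
    = -(M.g Z (Kc M X Y) * M.g W M.ξ) - M.g Z M.ξ * M.g W (Kc M X Y)
      - M.g Z (M.nabla X M.ξ) * M.g W (M.nabla Y M.ξ)
      - M.g Z (M.nabla Y M.ξ) * M.g W (M.nabla X M.ξ) := by
  have dk := congrArg (M.D X) (keyA Y Z W)
  rw [M.D_addr] at dk
  rw [D_sub, D_neg] at dk
  simp only [M.D_mul, M.metric_compat] at dk
  have n1 : M.nabla X (M.nablaθ Y Z)
      = M.nabla2θ X Y Z + M.nablaθ (M.nabla X Y) Z + M.nablaθ Y (M.nabla X Z) := by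
    simp only [nabla2θ]; abel
  have n2 : M.nabla X (M.nablaθ Y W)
      = M.nabla2θ X Y W + M.nablaθ (M.nabla X Y) W + M.nablaθ Y (M.nabla X W) := by
    simp only [nabla2θ]; abel
  have tZ : M.nabla X (M.θ Z) = M.nablaθ X Z + M.θ (M.nabla X Z) := by unfold nablaθ; abel
  have tW : M.nabla X (M.θ W) = M.nablaθ X W + M.θ (M.nabla X W) := by unfold nablaθ; abel
  have kv : M.nabla X (M.nabla Y M.ξ) = Kc M X Y + M.nabla (M.nabla X Y) M.ξ := by
    simp only [Kc]; abel
  rw [n1, n2, tZ, tW, kv] at dk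
  simp only [M.g_addl, g_addr] at dk
  have k1 := keyA (M.nabla X Y) Z W
  have k2 := keyA Y (M.nabla X Z) W
  have k3 := keyA Y Z (M.nabla X W)
  linear_combination dk - k1 - k2 - k3

end AuxNC

/-- |(∇_X θ)(Y)|² + g(Y,∇_X ξ)² = -R(X,Y,X,Y) + R(X,Y,θX,θY). -/
theorem stmt8 (M : NearlyCosymplectic) (X Y : M.V) :
    M.g (M.nablaθ X Y) (M.nablaθ X Y) + (M.g Y (M.nabla X M.ξ)) ^ 2 =
      -(M.g (M.R X Y X) Y) + M.g (M.R X Y (M.θ X)) (M.θ Y) := by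
  have r := ricci X Y X
  rw [N_diag Y X, sub_zero] at r
  have e1 : M.g (M.R X Y (M.θ X)) (M.θ Y)
      = M.g (M.θ (M.R X Y X)) (M.θ Y) + M.g (M.nabla2θ X Y X) (M.θ Y) := by
    rw [show M.R X Y (M.θ X) = M.θ (M.R X Y X) + M.nabla2θ X Y X from by
      rw [← r]; abel, M.g_addl]
  have e2 := M.θ_compat (M.R X Y X) Y
  have r4 := R_skew X Y X M.ξ
  rw [R_xi, g_subr] at r4
  have kd := K_diag Y X
  have b := bigB X Y X Y
  rw [N_diag X Y, P_diag X, g_zeror, g_zerol, P_skew Y X, g_negl, K_diag X Y,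
    h_diag X, h_skew Y X] at b
  linear_combination -e1 - e2 - b + M.g Y M.ξ * r4 + M.g Y M.ξ * kd
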